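/- For the Inoue S_M double complex (any α ≠ 0, β ∈ R), the non-Kählerness degrees are Δ¹ = 0 and Δ² = 2, where Δ^k = Σ_{p+q=k} (h^{p,q}_BC + h^{2-q,2-p}_BC) - 2 b_k and the Betti numbers are b1 = 1 (generated by φ2 - φ̄2), b2 = 0, b3 = 1. -/
import Mathlib


open Finset Module Complex

noncomputable section

/-- Index type: subsets of the 4 generators. Generators: 0 ↦ φ1, 1 ↦ φ2, 2 ↦ φ̄1, 3 ↦ φ̄2. -/
abbrev ι : Type := Finset (Fin 4)

/-- The underlying 16-dimensional vector space of Λ⟨φ1,φ2,φ̄1,φ̄2⟩. -/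
abbrev V : Type := ι → ℂ

/-- Basis vector corresponding to the wedge of the generators in `S` (in increasing order). -/
def e (S : ι) : V := fun T => if T = S then 1 else 0

/-- Structure constants of the exterior (wedge) product on basis elements. -/
def wedgeB (S T : ι) : V :=
  if Disjoint S T then
    ((-1 : ℂ) ^ (((S ×ˢ T).filter (fun x => x.2 < x.1)).card)) • e (S ∪ T)
  else 0

/-- The wedge product on `V`. -/
def mulV (v w : V) : V := ∑ S : ι, ∑ T : ι, (v S * w T) • wedgeB S T

/-- The odd derivation determined by its values `g` on the generators. -/
def der (g : Fin 4 → V) : V →ₗ[ℂ] V :=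
  (Pi.basisFun ℂ ι).constr ℂ (fun S =>
    ∑ i ∈ S, ((-1 : ℂ) ^ ((S.filter (fun j => j < i)).card)) •
      mulV (g i) (e (S.erase i)))

/-- Holomorphic degree of a basis index. -/
def pdeg (S : ι) : ℕ := (S ∩ ({0, 1} : Finset (Fin 4))).card

/-- Anti-holomorphic degree of a basis index. -/
def qdeg (S : ι) : ℕ := (S ∩ ({2, 3} : Finset (Fin 4))).card

/-- The bidegree-(p,q) component `A^{p,q}`. -/
def Apq (p q : ℕ) : Submodule ℂ V :=
  Submodule.span ℂ ((fun S => e S) '' {S : ι | pdeg S = p ∧ qdeg S = q})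

/-- The total-degree-k component `A^k`. -/
def Ak (k : ℕ) : Submodule ℂ V :=
  Submodule.span ℂ ((fun S => e S) '' {S : ι | S.card = k})

/-- Dimension of Dolbeault cohomology `H^{p,q}_∂̄ = ker ∂̄ / im ∂̄` in bidegree (p,q). -/
def hD (delbar : V →ₗ[ℂ] V) (p q : ℕ) : ℕ :=
  finrank ℂ (↥(Apq p q ⊓ LinearMap.ker delbar) ⧸
    Submodule.comap (Apq p q ⊓ LinearMap.ker delbar).subtype
      (Submodule.map delbar (Apq p (q - 1))))

/-- Dimension of Bott-Chern cohomology `H^{p,q}_BC = (ker ∂ ∩ ker ∂̄)/im ∂∂̄` in bidegree (p,q). -/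
def hBC (del delbar : V →ₗ[ℂ] V) (p q : ℕ) : ℕ :=
  finrank ℂ (↥(Apq p q ⊓ LinearMap.ker del ⊓ LinearMap.ker delbar) ⧸
    Submodule.comap (Apq p q ⊓ LinearMap.ker del ⊓ LinearMap.ker delbar).subtype
      (Submodule.map (del ∘ₗ delbar) (Apq (p - 1) (q - 1))))

/-- Dimension of Aeppli cohomology `H^{p,q}_A = ker ∂∂̄ / (im ∂ + im ∂̄)` in bidegree (p,q). -/
def hA (del delbar : V →ₗ[ℂ] V) (p q : ℕ) : ℕ :=
  finrank ℂ (↥(Apq p q ⊓ LinearMap.ker (del ∘ₗ delbar)) ⧸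
    Submodule.comap (Apq p q ⊓ LinearMap.ker (del ∘ₗ delbar)).subtype
      (Submodule.map del (Apq (p - 1) q) ⊔ Submodule.map delbar (Apq p (q - 1))))

/-- Dimension of the degree-k de Rham cohomology of the total complex with `d = ∂ + ∂̄`. -/
def betti (d : V →ₗ[ℂ] V) (k : ℕ) : ℕ :=
  finrank ℂ (↥(Ak k ⊓ LinearMap.ker d) ⧸
    Submodule.comap (Ak k ⊓ LinearMap.ker d).subtype
      (Submodule.map d (Ak (k - 1))))

/-- The coefficient c = (α - iβ)/(2i) of the Inoue S_M model. -/
def cSM (α β : ℝ) : ℂ := ((α : ℂ) - Complex.I * (β : ℂ)) / (2 * Complex.I)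

/-- The `∂` operator of the Inoue S_M model: ∂φ1 = c φ1∧φ2, ∂φ2 = 0,
∂φ̄1 = conj(c) φ2∧φ̄1 (conjugate relation), ∂φ̄2 = -iα φ2∧φ̄2. -/
def delSM (α β : ℝ) : V →ₗ[ℂ] V :=
  der ![cSM α β • e {0, 1}, 0, (starRingEnd ℂ (cSM α β)) • e {1, 2},
        (-(Complex.I * (α : ℂ))) • e {1, 3}]

/-- The `∂̄` operator of the Inoue S_M model: ∂̄φ1 = -c φ1∧φ̄2, ∂̄φ2 = -iα φ2∧φ̄2,
∂̄φ̄1 = conj(c) φ̄1∧φ̄2, ∂̄φ̄2 = 0. -/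
def delbarSM (α β : ℝ) : V →ₗ[ℂ] V :=
  der ![(-cSM α β) • e {0, 3}, (-(Complex.I * (α : ℂ))) • e {1, 3},
        (starRingEnd ℂ (cSM α β)) • e {2, 3}, 0]

/-- The total differential of the Inoue S_M complex. -/
def dSM (α β : ℝ) : V →ₗ[ℂ] V := delSM α β + delbarSM α β

section Aux
variable (α β : ℝ)

lemma e_eq_basisFun (S : ι) : e S = Pi.basisFun ℂ ι S := by
  funext T
  simp [e, Pi.basisFun_apply, Pi.single_apply]

lemma der_apply (g : Fin 4 → V) (S : ι) :
    der g (e S) = ∑ i ∈ S, ((-1 : ℂ) ^ ((S.filter (fun j => j < i)).card)) •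
      mulV (g i) (e (S.erase i)) := by
  rw [e_eq_basisFun, der, Basis.constr_basis]

lemma mulV_zero (w : V) : mulV 0 w = 0 := by
  simp [mulV]

lemma mulV_smul_e (a : ℂ) (A B : ι) : mulV (a • e A) (e B) = a • wedgeB A B := by
  unfold mulV
  rw [Finset.sum_eq_single A]
  · rw [Finset.sum_eq_single B]
    · simp [e]
    · intro T _ hT; simp [e, hT]
    · simp
  · intro S _ hS; simp [e, hS]
  · simp

lemma wedge_pos {A B C : ι} (hd : Disjoint A B) (hu : A ∪ B = C)
    (hn : (((A ×ˢ B).filter (fun x => x.2 < x.1)).card) % 2 = 0) : wedgeB A B = e C := by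
  rw [wedgeB, if_pos hd, hu, Even.neg_one_pow (Nat.even_iff.2 hn), one_smul]

lemma wedge_neg {A B C : ι} (hd : Disjoint A B) (hu : A ∪ B = C)
    (hn : (((A ×ˢ B).filter (fun x => x.2 < x.1)).card) % 2 = 1) : wedgeB A B = -e C := by
  rw [wedgeB, if_pos hd, hu, Odd.neg_one_pow (Nat.odd_iff.2 hn), neg_one_smul]

lemma wedge_not {A B : ι} (hd : ¬ Disjoint A B) : wedgeB A B = 0 := if_neg hd

end Aux
section Dels
variable (α β : ℝ)
lemma del_eE : delSM α β (e (∅ : ι)) = 0 := by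
  unfold delSM
  rw [der_apply]
  simp

lemma delbar_eE : delbarSM α β (e (∅ : ι)) = 0 := by
  unfold delbarSM
  rw [der_apply]
  simp

lemma del_e0 : delSM α β (e ({0} : ι)) = (cSM α β) • e ({0, 1} : ι) := by
  unfold delSM
  rw [der_apply]
  rw [Finset.sum_singleton]
  simp only [Matrix.cons_val_zero, Matrix.cons_val_one, Matrix.cons_val_two, Matrix.cons_val_three, Matrix.head_cons, Matrix.tail_cons]
  rw [show (({0} : ι).erase 0) = (∅ : ι) from by decide]
  simp only [mulV_smul_e, mulV_zero]
  rw [wedge_pos (A := ({0, 1} : ι)) (B := (∅ : ι)) (C := ({0, 1} : ι)) (by decide) (by decide) (by decide)]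
  rw [show (({0} : ι).filter (fun j => j < 0)).card = 0 from by decide]
  norm_num
  all_goals module

lemma delbar_e0 : delbarSM α β (e ({0} : ι)) = (-cSM α β) • e ({0, 3} : ι) := by
  unfold delbarSM
  rw [der_apply]
  rw [Finset.sum_singleton]
  simp only [Matrix.cons_val_zero, Matrix.cons_val_one, Matrix.cons_val_two, Matrix.cons_val_three, Matrix.head_cons, Matrix.tail_cons]
  rw [show (({0} : ι).erase 0) = (∅ : ι) from by decide]
  simp only [mulV_smul_e, mulV_zero]
  rw [wedge_pos (A := ({0, 3} : ι)) (B := (∅ : ι)) (C := ({0, 3} : ι)) (by decide) (by decide) (by decide)]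
  rw [show (({0} : ι).filter (fun j => j < 0)).card = 0 from by decide]
  norm_num
  all_goals module

lemma del_e1 : delSM α β (e ({1} : ι)) = 0 := by
  unfold delSM
  rw [der_apply]
  rw [Finset.sum_singleton]
  simp only [Matrix.cons_val_zero, Matrix.cons_val_one, Matrix.cons_val_two, Matrix.cons_val_three, Matrix.head_cons, Matrix.tail_cons]
  rw [show (({1} : ι).erase 1) = (∅ : ι) from by decide]
  simp only [mulV_smul_e, mulV_zero]
  rw [show (({1} : ι).filter (fun j => j < 1)).card = 0 from by decide]
  norm_num
  all_goals module

lemma delbar_e1 : delbarSM α β (e ({1} : ι)) = ((-(Complex.I * (α:ℂ)))) • e ({1, 3} : ι) := by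
  unfold delbarSM
  rw [der_apply]
  rw [Finset.sum_singleton]
  simp only [Matrix.cons_val_zero, Matrix.cons_val_one, Matrix.cons_val_two, Matrix.cons_val_three, Matrix.head_cons, Matrix.tail_cons]
  rw [show (({1} : ι).erase 1) = (∅ : ι) from by decide]
  simp only [mulV_smul_e, mulV_zero]
  rw [wedge_pos (A := ({1, 3} : ι)) (B := (∅ : ι)) (C := ({1, 3} : ι)) (by decide) (by decide) (by decide)]
  rw [show (({1} : ι).filter (fun j => j < 1)).card = 0 from by decide]
  norm_num
  all_goals module

lemma del_e2 : delSM α β (e ({2} : ι)) = ((starRingEnd ℂ) (cSM α β)) • e ({1, 2} : ι) := by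
  unfold delSM
  rw [der_apply]
  rw [Finset.sum_singleton]
  simp only [Matrix.cons_val_zero, Matrix.cons_val_one, Matrix.cons_val_two, Matrix.cons_val_three, Matrix.head_cons, Matrix.tail_cons]
  rw [show (({2} : ι).erase 2) = (∅ : ι) from by decide]
  simp only [mulV_smul_e, mulV_zero]
  rw [wedge_pos (A := ({1, 2} : ι)) (B := (∅ : ι)) (C := ({1, 2} : ι)) (by decide) (by decide) (by decide)]
  rw [show (({2} : ι).filter (fun j => j < 2)).card = 0 from by decide]
  norm_num
  all_goals module

lemma delbar_e2 : delbarSM α β (e ({2} : ι)) = ((starRingEnd ℂ) (cSM α β)) • e ({2, 3} : ι) := by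
  unfold delbarSM
  rw [der_apply]
  rw [Finset.sum_singleton]
  simp only [Matrix.cons_val_zero, Matrix.cons_val_one, Matrix.cons_val_two, Matrix.cons_val_three, Matrix.head_cons, Matrix.tail_cons]
  rw [show (({2} : ι).erase 2) = (∅ : ι) from by decide]
  simp only [mulV_smul_e, mulV_zero]
  rw [wedge_pos (A := ({2, 3} : ι)) (B := (∅ : ι)) (C := ({2, 3} : ι)) (by decide) (by decide) (by decide)]
  rw [show (({2} : ι).filter (fun j => j < 2)).card = 0 from by decide]
  norm_num
  all_goals module

lemma del_e3 : delSM α β (e ({3} : ι)) = ((-(Complex.I * (α:ℂ)))) • e ({1, 3} : ι) := by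
  unfold delSM
  rw [der_apply]
  rw [Finset.sum_singleton]
  simp only [Matrix.cons_val_zero, Matrix.cons_val_one, Matrix.cons_val_two, Matrix.cons_val_three, Matrix.head_cons, Matrix.tail_cons]
  rw [show (({3} : ι).erase 3) = (∅ : ι) from by decide]
  simp only [mulV_smul_e, mulV_zero]
  rw [wedge_pos (A := ({1, 3} : ι)) (B := (∅ : ι)) (C := ({1, 3} : ι)) (by decide) (by decide) (by decide)]
  rw [show (({3} : ι).filter (fun j => j < 3)).card = 0 from by decide]
  norm_num
  all_goals module

lemma delbar_e3 : delbarSM α β (e ({3} : ι)) = 0 := by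
  unfold delbarSM
  rw [der_apply]
  rw [Finset.sum_singleton]
  simp only [Matrix.cons_val_zero, Matrix.cons_val_one, Matrix.cons_val_two, Matrix.cons_val_three, Matrix.head_cons, Matrix.tail_cons]
  rw [show (({3} : ι).erase 3) = (∅ : ι) from by decide]
  simp only [mulV_smul_e, mulV_zero]
  rw [show (({3} : ι).filter (fun j => j < 3)).card = 0 from by decide]
  norm_num
  all_goals module

lemma del_e01 : delSM α β (e ({0, 1} : ι)) = 0 := by
  unfold delSM
  rw [der_apply]
  rw [Finset.sum_insert (by decide), Finset.sum_singleton]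
  simp only [Matrix.cons_val_zero, Matrix.cons_val_one, Matrix.cons_val_two, Matrix.cons_val_three, Matrix.head_cons, Matrix.tail_cons]
  rw [show (({0, 1} : ι).erase 0) = ({1} : ι) from by decide, show (({0, 1} : ι).erase 1) = ({0} : ι) from by decide]
  simp only [mulV_smul_e, mulV_zero]
  rw [wedge_not (A := ({0, 1} : ι)) (B := ({1} : ι)) (by decide)]
  rw [show (({0, 1} : ι).filter (fun j => j < 0)).card = 0 from by decide, show (({0, 1} : ι).filter (fun j => j < 1)).card = 1 from by decide]
  norm_num
  all_goals module

lemma delbar_e01 : delbarSM α β (e ({0, 1} : ι)) = (cSM α β - (-(Complex.I * (α:ℂ)))) • e ({0, 1, 3} : ι) := by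
  unfold delbarSM
  rw [der_apply]
  rw [Finset.sum_insert (by decide), Finset.sum_singleton]
  simp only [Matrix.cons_val_zero, Matrix.cons_val_one, Matrix.cons_val_two, Matrix.cons_val_three, Matrix.head_cons, Matrix.tail_cons]
  rw [show (({0, 1} : ι).erase 0) = ({1} : ι) from by decide, show (({0, 1} : ι).erase 1) = ({0} : ι) from by decide]
  simp only [mulV_smul_e, mulV_zero]
  rw [wedge_neg (A := ({0, 3} : ι)) (B := ({1} : ι)) (C := ({0, 1, 3} : ι)) (by decide) (by decide) (by decide), wedge_pos (A := ({1, 3} : ι)) (B := ({0} : ι)) (C := ({0, 1, 3} : ι)) (by decide) (by decide) (by decide)]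
  rw [show (({0, 1} : ι).filter (fun j => j < 0)).card = 0 from by decide, show (({0, 1} : ι).filter (fun j => j < 1)).card = 1 from by decide]
  norm_num
  all_goals module

lemma del_e02 : delSM α β (e ({0, 2} : ι)) = (cSM α β - (starRingEnd ℂ) (cSM α β)) • e ({0, 1, 2} : ι) := by
  unfold delSM
  rw [der_apply]
  rw [Finset.sum_insert (by decide), Finset.sum_singleton]
  simp only [Matrix.cons_val_zero, Matrix.cons_val_one, Matrix.cons_val_two, Matrix.cons_val_three, Matrix.head_cons, Matrix.tail_cons]
  rw [show (({0, 2} : ι).erase 0) = ({2} : ι) from by decide, show (({0, 2} : ι).erase 2) = ({0} : ι) from by decide]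
  simp only [mulV_smul_e, mulV_zero]
  rw [wedge_pos (A := ({0, 1} : ι)) (B := ({2} : ι)) (C := ({0, 1, 2} : ι)) (by decide) (by decide) (by decide), wedge_pos (A := ({1, 2} : ι)) (B := ({0} : ι)) (C := ({0, 1, 2} : ι)) (by decide) (by decide) (by decide)]
  rw [show (({0, 2} : ι).filter (fun j => j < 0)).card = 0 from by decide, show (({0, 2} : ι).filter (fun j => j < 2)).card = 1 from by decide]
  norm_num
  all_goals module

lemma delbar_e02 : delbarSM α β (e ({0, 2} : ι)) = (cSM α β - (starRingEnd ℂ) (cSM α β)) • e ({0, 2, 3} : ι) := by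
  unfold delbarSM
  rw [der_apply]
  rw [Finset.sum_insert (by decide), Finset.sum_singleton]
  simp only [Matrix.cons_val_zero, Matrix.cons_val_one, Matrix.cons_val_two, Matrix.cons_val_three, Matrix.head_cons, Matrix.tail_cons]
  rw [show (({0, 2} : ι).erase 0) = ({2} : ι) from by decide, show (({0, 2} : ι).erase 2) = ({0} : ι) from by decide]
  simp only [mulV_smul_e, mulV_zero]
  rw [wedge_neg (A := ({0, 3} : ι)) (B := ({2} : ι)) (C := ({0, 2, 3} : ι)) (by decide) (by decide) (by decide), wedge_pos (A := ({2, 3} : ι)) (B := ({0} : ι)) (C := ({0, 2, 3} : ι)) (by decide) (by decide) (by decide)]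
  rw [show (({0, 2} : ι).filter (fun j => j < 0)).card = 0 from by decide, show (({0, 2} : ι).filter (fun j => j < 2)).card = 1 from by decide]
  norm_num
  all_goals module

lemma del_e03 : delSM α β (e ({0, 3} : ι)) = (cSM α β - (-(Complex.I * (α:ℂ)))) • e ({0, 1, 3} : ι) := by
  unfold delSM
  rw [der_apply]
  rw [Finset.sum_insert (by decide), Finset.sum_singleton]
  simp only [Matrix.cons_val_zero, Matrix.cons_val_one, Matrix.cons_val_two, Matrix.cons_val_three, Matrix.head_cons, Matrix.tail_cons]
  rw [show (({0, 3} : ι).erase 0) = ({3} : ι) from by decide, show (({0, 3} : ι).erase 3) = ({0} : ι) from by decide]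
  simp only [mulV_smul_e, mulV_zero]
  rw [wedge_pos (A := ({0, 1} : ι)) (B := ({3} : ι)) (C := ({0, 1, 3} : ι)) (by decide) (by decide) (by decide), wedge_pos (A := ({1, 3} : ι)) (B := ({0} : ι)) (C := ({0, 1, 3} : ι)) (by decide) (by decide) (by decide)]
  rw [show (({0, 3} : ι).filter (fun j => j < 0)).card = 0 from by decide, show (({0, 3} : ι).filter (fun j => j < 3)).card = 1 from by decide]
  norm_num
  all_goals module

lemma delbar_e03 : delbarSM α β (e ({0, 3} : ι)) = 0 := by
  unfold delbarSM
  rw [der_apply]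
  rw [Finset.sum_insert (by decide), Finset.sum_singleton]
  simp only [Matrix.cons_val_zero, Matrix.cons_val_one, Matrix.cons_val_two, Matrix.cons_val_three, Matrix.head_cons, Matrix.tail_cons]
  rw [show (({0, 3} : ι).erase 0) = ({3} : ι) from by decide, show (({0, 3} : ι).erase 3) = ({0} : ι) from by decide]
  simp only [mulV_smul_e, mulV_zero]
  rw [wedge_not (A := ({0, 3} : ι)) (B := ({3} : ι)) (by decide)]
  rw [show (({0, 3} : ι).filter (fun j => j < 0)).card = 0 from by decide, show (({0, 3} : ι).filter (fun j => j < 3)).card = 1 from by decide]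
  norm_num
  all_goals module

lemma del_e12 : delSM α β (e ({1, 2} : ι)) = 0 := by
  unfold delSM
  rw [der_apply]
  rw [Finset.sum_insert (by decide), Finset.sum_singleton]
  simp only [Matrix.cons_val_zero, Matrix.cons_val_one, Matrix.cons_val_two, Matrix.cons_val_three, Matrix.head_cons, Matrix.tail_cons]
  rw [show (({1, 2} : ι).erase 1) = ({2} : ι) from by decide, show (({1, 2} : ι).erase 2) = ({1} : ι) from by decide]
  simp only [mulV_smul_e, mulV_zero]
  rw [wedge_not (A := ({1, 2} : ι)) (B := ({1} : ι)) (by decide)]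
  rw [show (({1, 2} : ι).filter (fun j => j < 1)).card = 0 from by decide, show (({1, 2} : ι).filter (fun j => j < 2)).card = 1 from by decide]
  norm_num
  all_goals module

lemma delbar_e12 : delbarSM α β (e ({1, 2} : ι)) = (-(-(Complex.I * (α:ℂ))) - (starRingEnd ℂ) (cSM α β)) • e ({1, 2, 3} : ι) := by
  unfold delbarSM
  rw [der_apply]
  rw [Finset.sum_insert (by decide), Finset.sum_singleton]
  simp only [Matrix.cons_val_zero, Matrix.cons_val_one, Matrix.cons_val_two, Matrix.cons_val_three, Matrix.head_cons, Matrix.tail_cons]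
  rw [show (({1, 2} : ι).erase 1) = ({2} : ι) from by decide, show (({1, 2} : ι).erase 2) = ({1} : ι) from by decide]
  simp only [mulV_smul_e, mulV_zero]
  rw [wedge_neg (A := ({1, 3} : ι)) (B := ({2} : ι)) (C := ({1, 2, 3} : ι)) (by decide) (by decide) (by decide), wedge_pos (A := ({2, 3} : ι)) (B := ({1} : ι)) (C := ({1, 2, 3} : ι)) (by decide) (by decide) (by decide)]
  rw [show (({1, 2} : ι).filter (fun j => j < 1)).card = 0 from by decide, show (({1, 2} : ι).filter (fun j => j < 2)).card = 1 from by decide]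
  norm_num
  all_goals module

lemma del_e13 : delSM α β (e ({1, 3} : ι)) = 0 := by
  unfold delSM
  rw [der_apply]
  rw [Finset.sum_insert (by decide), Finset.sum_singleton]
  simp only [Matrix.cons_val_zero, Matrix.cons_val_one, Matrix.cons_val_two, Matrix.cons_val_three, Matrix.head_cons, Matrix.tail_cons]
  rw [show (({1, 3} : ι).erase 1) = ({3} : ι) from by decide, show (({1, 3} : ι).erase 3) = ({1} : ι) from by decide]
  simp only [mulV_smul_e, mulV_zero]
  rw [wedge_not (A := ({1, 3} : ι)) (B := ({1} : ι)) (by decide)]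
  rw [show (({1, 3} : ι).filter (fun j => j < 1)).card = 0 from by decide, show (({1, 3} : ι).filter (fun j => j < 3)).card = 1 from by decide]
  norm_num
  all_goals module

lemma delbar_e13 : delbarSM α β (e ({1, 3} : ι)) = 0 := by
  unfold delbarSM
  rw [der_apply]
  rw [Finset.sum_insert (by decide), Finset.sum_singleton]
  simp only [Matrix.cons_val_zero, Matrix.cons_val_one, Matrix.cons_val_two, Matrix.cons_val_three, Matrix.head_cons, Matrix.tail_cons]
  rw [show (({1, 3} : ι).erase 1) = ({3} : ι) from by decide, show (({1, 3} : ι).erase 3) = ({1} : ι) from by decide]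
  simp only [mulV_smul_e, mulV_zero]
  rw [wedge_not (A := ({1, 3} : ι)) (B := ({3} : ι)) (by decide)]
  rw [show (({1, 3} : ι).filter (fun j => j < 1)).card = 0 from by decide, show (({1, 3} : ι).filter (fun j => j < 3)).card = 1 from by decide]
  norm_num
  all_goals module

lemma del_e23 : delSM α β (e ({2, 3} : ι)) = ((starRingEnd ℂ) (cSM α β) + (-(Complex.I * (α:ℂ)))) • e ({1, 2, 3} : ι) := by
  unfold delSM
  rw [der_apply]
  rw [Finset.sum_insert (by decide), Finset.sum_singleton]
  simp only [Matrix.cons_val_zero, Matrix.cons_val_one, Matrix.cons_val_two, Matrix.cons_val_three, Matrix.head_cons, Matrix.tail_cons]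
  rw [show (({2, 3} : ι).erase 2) = ({3} : ι) from by decide, show (({2, 3} : ι).erase 3) = ({2} : ι) from by decide]
  simp only [mulV_smul_e, mulV_zero]
  rw [wedge_pos (A := ({1, 2} : ι)) (B := ({3} : ι)) (C := ({1, 2, 3} : ι)) (by decide) (by decide) (by decide), wedge_neg (A := ({1, 3} : ι)) (B := ({2} : ι)) (C := ({1, 2, 3} : ι)) (by decide) (by decide) (by decide)]
  rw [show (({2, 3} : ι).filter (fun j => j < 2)).card = 0 from by decide, show (({2, 3} : ι).filter (fun j => j < 3)).card = 1 from by decide]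
  norm_num
  all_goals module

lemma delbar_e23 : delbarSM α β (e ({2, 3} : ι)) = 0 := by
  unfold delbarSM
  rw [der_apply]
  rw [Finset.sum_insert (by decide), Finset.sum_singleton]
  simp only [Matrix.cons_val_zero, Matrix.cons_val_one, Matrix.cons_val_two, Matrix.cons_val_three, Matrix.head_cons, Matrix.tail_cons]
  rw [show (({2, 3} : ι).erase 2) = ({3} : ι) from by decide, show (({2, 3} : ι).erase 3) = ({2} : ι) from by decide]
  simp only [mulV_smul_e, mulV_zero]
  rw [wedge_not (A := ({2, 3} : ι)) (B := ({3} : ι)) (by decide)]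
  rw [show (({2, 3} : ι).filter (fun j => j < 2)).card = 0 from by decide, show (({2, 3} : ι).filter (fun j => j < 3)).card = 1 from by decide]
  norm_num
  all_goals module

lemma del_e012 : delSM α β (e ({0, 1, 2} : ι)) = 0 := by
  unfold delSM
  rw [der_apply]
  rw [Finset.sum_insert (by decide), Finset.sum_insert (by decide), Finset.sum_singleton]
  simp only [Matrix.cons_val_zero, Matrix.cons_val_one, Matrix.cons_val_two, Matrix.cons_val_three, Matrix.head_cons, Matrix.tail_cons]
  rw [show (({0, 1, 2} : ι).erase 0) = ({1, 2} : ι) from by decide, show (({0, 1, 2} : ι).erase 1) = ({0, 2} : ι) from by decide, show (({0, 1, 2} : ι).erase 2) = ({0, 1} : ι) from by decide]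
  simp only [mulV_smul_e, mulV_zero]
  rw [wedge_not (A := ({0, 1} : ι)) (B := ({1, 2} : ι)) (by decide), wedge_not (A := ({1, 2} : ι)) (B := ({0, 1} : ι)) (by decide)]
  rw [show (({0, 1, 2} : ι).filter (fun j => j < 0)).card = 0 from by decide, show (({0, 1, 2} : ι).filter (fun j => j < 1)).card = 1 from by decide, show (({0, 1, 2} : ι).filter (fun j => j < 2)).card = 2 from by decide]
  norm_num
  all_goals module

lemma delbar_e012 : delbarSM α β (e ({0, 1, 2} : ι)) = (-cSM α β + (-(Complex.I * (α:ℂ))) + (starRingEnd ℂ) (cSM α β)) • e ({0, 1, 2, 3} : ι) := by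
  unfold delbarSM
  rw [der_apply]
  rw [Finset.sum_insert (by decide), Finset.sum_insert (by decide), Finset.sum_singleton]
  simp only [Matrix.cons_val_zero, Matrix.cons_val_one, Matrix.cons_val_two, Matrix.cons_val_three, Matrix.head_cons, Matrix.tail_cons]
  rw [show (({0, 1, 2} : ι).erase 0) = ({1, 2} : ι) from by decide, show (({0, 1, 2} : ι).erase 1) = ({0, 2} : ι) from by decide, show (({0, 1, 2} : ι).erase 2) = ({0, 1} : ι) from by decide]
  simp only [mulV_smul_e, mulV_zero]
  rw [wedge_pos (A := ({0, 3} : ι)) (B := ({1, 2} : ι)) (C := ({0, 1, 2, 3} : ι)) (by decide) (by decide) (by decide), wedge_neg (A := ({1, 3} : ι)) (B := ({0, 2} : ι)) (C := ({0, 1, 2, 3} : ι)) (by decide) (by decide) (by decide), wedge_pos (A := ({2, 3} : ι)) (B := ({0, 1} : ι)) (C := ({0, 1, 2, 3} : ι)) (by decide) (by decide) (by decide)]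
  rw [show (({0, 1, 2} : ι).filter (fun j => j < 0)).card = 0 from by decide, show (({0, 1, 2} : ι).filter (fun j => j < 1)).card = 1 from by decide, show (({0, 1, 2} : ι).filter (fun j => j < 2)).card = 2 from by decide]
  norm_num
  all_goals module

lemma del_e013 : delSM α β (e ({0, 1, 3} : ι)) = 0 := by
  unfold delSM
  rw [der_apply]
  rw [Finset.sum_insert (by decide), Finset.sum_insert (by decide), Finset.sum_singleton]
  simp only [Matrix.cons_val_zero, Matrix.cons_val_one, Matrix.cons_val_two, Matrix.cons_val_three, Matrix.head_cons, Matrix.tail_cons]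
  rw [show (({0, 1, 3} : ι).erase 0) = ({1, 3} : ι) from by decide, show (({0, 1, 3} : ι).erase 1) = ({0, 3} : ι) from by decide, show (({0, 1, 3} : ι).erase 3) = ({0, 1} : ι) from by decide]
  simp only [mulV_smul_e, mulV_zero]
  rw [wedge_not (A := ({0, 1} : ι)) (B := ({1, 3} : ι)) (by decide), wedge_not (A := ({1, 3} : ι)) (B := ({0, 1} : ι)) (by decide)]
  rw [show (({0, 1, 3} : ι).filter (fun j => j < 0)).card = 0 from by decide, show (({0, 1, 3} : ι).filter (fun j => j < 1)).card = 1 from by decide, show (({0, 1, 3} : ι).filter (fun j => j < 3)).card = 2 from by decide]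
  norm_num
  all_goals module

lemma delbar_e013 : delbarSM α β (e ({0, 1, 3} : ι)) = 0 := by
  unfold delbarSM
  rw [der_apply]
  rw [Finset.sum_insert (by decide), Finset.sum_insert (by decide), Finset.sum_singleton]
  simp only [Matrix.cons_val_zero, Matrix.cons_val_one, Matrix.cons_val_two, Matrix.cons_val_three, Matrix.head_cons, Matrix.tail_cons]
  rw [show (({0, 1, 3} : ι).erase 0) = ({1, 3} : ι) from by decide, show (({0, 1, 3} : ι).erase 1) = ({0, 3} : ι) from by decide, show (({0, 1, 3} : ι).erase 3) = ({0, 1} : ι) from by decide]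
  simp only [mulV_smul_e, mulV_zero]
  rw [wedge_not (A := ({0, 3} : ι)) (B := ({1, 3} : ι)) (by decide), wedge_not (A := ({1, 3} : ι)) (B := ({0, 3} : ι)) (by decide)]
  rw [show (({0, 1, 3} : ι).filter (fun j => j < 0)).card = 0 from by decide, show (({0, 1, 3} : ι).filter (fun j => j < 1)).card = 1 from by decide, show (({0, 1, 3} : ι).filter (fun j => j < 3)).card = 2 from by decide]
  norm_num
  all_goals module

lemma del_e023 : delSM α β (e ({0, 2, 3} : ι)) = (cSM α β - (starRingEnd ℂ) (cSM α β) - (-(Complex.I * (α:ℂ)))) • e ({0, 1, 2, 3} : ι) := by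
  unfold delSM
  rw [der_apply]
  rw [Finset.sum_insert (by decide), Finset.sum_insert (by decide), Finset.sum_singleton]
  simp only [Matrix.cons_val_zero, Matrix.cons_val_one, Matrix.cons_val_two, Matrix.cons_val_three, Matrix.head_cons, Matrix.tail_cons]
  rw [show (({0, 2, 3} : ι).erase 0) = ({2, 3} : ι) from by decide, show (({0, 2, 3} : ι).erase 2) = ({0, 3} : ι) from by decide, show (({0, 2, 3} : ι).erase 3) = ({0, 2} : ι) from by decide]
  simp only [mulV_smul_e, mulV_zero]
  rw [wedge_pos (A := ({0, 1} : ι)) (B := ({2, 3} : ι)) (C := ({0, 1, 2, 3} : ι)) (by decide) (by decide) (by decide), wedge_pos (A := ({1, 2} : ι)) (B := ({0, 3} : ι)) (C := ({0, 1, 2, 3} : ι)) (by decide) (by decide) (by decide), wedge_neg (A := ({1, 3} : ι)) (B := ({0, 2} : ι)) (C := ({0, 1, 2, 3} : ι)) (by decide) (by decide) (by decide)]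
  rw [show (({0, 2, 3} : ι).filter (fun j => j < 0)).card = 0 from by decide, show (({0, 2, 3} : ι).filter (fun j => j < 2)).card = 1 from by decide, show (({0, 2, 3} : ι).filter (fun j => j < 3)).card = 2 from by decide]
  norm_num
  all_goals module

lemma delbar_e023 : delbarSM α β (e ({0, 2, 3} : ι)) = 0 := by
  unfold delbarSM
  rw [der_apply]
  rw [Finset.sum_insert (by decide), Finset.sum_insert (by decide), Finset.sum_singleton]
  simp only [Matrix.cons_val_zero, Matrix.cons_val_one, Matrix.cons_val_two, Matrix.cons_val_three, Matrix.head_cons, Matrix.tail_cons]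
  rw [show (({0, 2, 3} : ι).erase 0) = ({2, 3} : ι) from by decide, show (({0, 2, 3} : ι).erase 2) = ({0, 3} : ι) from by decide, show (({0, 2, 3} : ι).erase 3) = ({0, 2} : ι) from by decide]
  simp only [mulV_smul_e, mulV_zero]
  rw [wedge_not (A := ({0, 3} : ι)) (B := ({2, 3} : ι)) (by decide), wedge_not (A := ({2, 3} : ι)) (B := ({0, 3} : ι)) (by decide)]
  rw [show (({0, 2, 3} : ι).filter (fun j => j < 0)).card = 0 from by decide, show (({0, 2, 3} : ι).filter (fun j => j < 2)).card = 1 from by decide, show (({0, 2, 3} : ι).filter (fun j => j < 3)).card = 2 from by decide]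
  norm_num
  all_goals module

lemma del_e123 : delSM α β (e ({1, 2, 3} : ι)) = 0 := by
  unfold delSM
  rw [der_apply]
  rw [Finset.sum_insert (by decide), Finset.sum_insert (by decide), Finset.sum_singleton]
  simp only [Matrix.cons_val_zero, Matrix.cons_val_one, Matrix.cons_val_two, Matrix.cons_val_three, Matrix.head_cons, Matrix.tail_cons]
  rw [show (({1, 2, 3} : ι).erase 1) = ({2, 3} : ι) from by decide, show (({1, 2, 3} : ι).erase 2) = ({1, 3} : ι) from by decide, show (({1, 2, 3} : ι).erase 3) = ({1, 2} : ι) from by decide]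
  simp only [mulV_smul_e, mulV_zero]
  rw [wedge_not (A := ({1, 2} : ι)) (B := ({1, 3} : ι)) (by decide), wedge_not (A := ({1, 3} : ι)) (B := ({1, 2} : ι)) (by decide)]
  rw [show (({1, 2, 3} : ι).filter (fun j => j < 1)).card = 0 from by decide, show (({1, 2, 3} : ι).filter (fun j => j < 2)).card = 1 from by decide, show (({1, 2, 3} : ι).filter (fun j => j < 3)).card = 2 from by decide]
  norm_num
  all_goals module

lemma delbar_e123 : delbarSM α β (e ({1, 2, 3} : ι)) = 0 := by
  unfold delbarSM
  rw [der_apply]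
  rw [Finset.sum_insert (by decide), Finset.sum_insert (by decide), Finset.sum_singleton]
  simp only [Matrix.cons_val_zero, Matrix.cons_val_one, Matrix.cons_val_two, Matrix.cons_val_three, Matrix.head_cons, Matrix.tail_cons]
  rw [show (({1, 2, 3} : ι).erase 1) = ({2, 3} : ι) from by decide, show (({1, 2, 3} : ι).erase 2) = ({1, 3} : ι) from by decide, show (({1, 2, 3} : ι).erase 3) = ({1, 2} : ι) from by decide]
  simp only [mulV_smul_e, mulV_zero]
  rw [wedge_not (A := ({1, 3} : ι)) (B := ({2, 3} : ι)) (by decide), wedge_not (A := ({2, 3} : ι)) (B := ({1, 3} : ι)) (by decide)]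
  rw [show (({1, 2, 3} : ι).filter (fun j => j < 1)).card = 0 from by decide, show (({1, 2, 3} : ι).filter (fun j => j < 2)).card = 1 from by decide, show (({1, 2, 3} : ι).filter (fun j => j < 3)).card = 2 from by decide]
  norm_num
  all_goals module

end Dels
section Infra

lemma e_apply (S T : ι) : e S T = if T = S then 1 else 0 := rfl

def suppSub (P : ι → Prop) : Submodule ℂ V where
  carrier := {v | ∀ S, ¬ P S → v S = 0}
  add_mem' := by intro a b ha hb S hS; simp only [Pi.add_apply, ha S hS, hb S hS, add_zero]
  zero_mem' := by intro S hS; rfl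
  smul_mem' := by intro c a ha S hS; simp only [Pi.smul_apply, ha S hS, smul_zero]

lemma mem_suppSub {P : ι → Prop} {v : V} (h : v ∈ suppSub P) : ∀ S, ¬ P S → v S = 0 := h

lemma Apq_le_supp (p q : ℕ) : Apq p q ≤ suppSub (fun S => pdeg S = p ∧ qdeg S = q) := by
  rw [Apq, Submodule.span_le]
  rintro x ⟨S0, hS0, rfl⟩ S hS
  simp only [e_apply]
  rw [if_neg]
  rintro rfl
  exact hS hS0

lemma Ak_le_supp (k : ℕ) : Ak k ≤ suppSub (fun S => S.card = k) := by
  rw [Ak, Submodule.span_le]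
  rintro x ⟨S0, hS0, rfl⟩ S hS
  simp only [e_apply]
  rw [if_neg]
  rintro rfl
  exact hS hS0

lemma decomp (P : ι → Prop) (L : Finset ι) (hL : ∀ S, P S ↔ S ∈ L)
    (v : V) (hv : ∀ S, ¬ P S → v S = 0) : v = ∑ S ∈ L, v S • e S := by
  funext T
  have h1 : (∑ S ∈ L, v S • e S) T = ∑ S ∈ L, (if T = S then v S else 0) := by
    rw [Finset.sum_apply]
    refine Finset.sum_congr rfl fun S _ => ?_
    simp [e_apply, mul_ite]
  rw [h1, Finset.sum_ite_eq]
  by_cases hT : T ∈ L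
  · simp [hT]
  · simp [hT, hv T (fun h => hT ((hL T).1 h))]

lemma span_eq_gen (Mod : Submodule ℂ V) (p q : ℕ) (Lset : Set ι) (L : Set V)
    (h1 : {S : ι | pdeg S = p ∧ qdeg S = q} = Lset) (h2 : e '' Lset = L)
    (h3 : Apq p q = Mod) : Mod = Submodule.span ℂ L := by
  rw [← h3, Apq, h1, h2]

lemma quot_rank {N D : Submodule ℂ V} {a b : ℕ}
    (hN : finrank ℂ N = a) (hI : finrank ℂ ↥(D ⊓ N) = b) :
    finrank ℂ (↥N ⧸ Submodule.comap N.subtype D) = a - b := by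
  have h1 : Submodule.comap N.subtype D = Submodule.comap N.subtype (D ⊓ N) := by
    ext x; simp [x.2]
  have h2 : finrank ℂ (Submodule.comap N.subtype (D ⊓ N)) = b := by
    rw [← hI]
    exact LinearEquiv.finrank_eq (Submodule.comapSubtypeEquivOfLe inf_le_right)
  rw [h1]
  have h3 := Submodule.finrank_quotient_add_finrank (Submodule.comap N.subtype (D ⊓ N))
  omega

lemma linInd_e {n : ℕ} (f : Fin n → ι) (hf : Function.Injective f) :
    LinearIndependent ℂ (fun i => e (f i)) := by
  have h := (Pi.basisFun ℂ ι).linearIndependent.comp f hf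
  have : (fun i => e (f i)) = (Pi.basisFun ℂ ι) ∘ f := by
    funext i; exact e_eq_basisFun (f i)
  rw [this]; exact h

lemma rank_pair {v w : V} (h : LinearIndependent ℂ ![v, w]) :
    finrank ℂ (Submodule.span ℂ ({v, w} : Set V)) = 2 := by
  have h2 := finrank_span_eq_card h
  have h3 : Set.range ![v, w] = {v, w} := by simp [Matrix.range_cons, Matrix.range_empty, Set.pair_comm]
  rw [h3] at h2
  simpa using h2

end Infra
section Scalars
variable (α β : ℝ)

lemma cSM_eq : cSM α β = (-(β:ℂ) - Complex.I*α)/2 := by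
  rw [cSM, div_eq_div_iff (by simp [Complex.I_ne_zero]) (by norm_num)]
  ring_nf
  rw [Complex.I_sq]
  ring

lemma conj_cSM : (starRingEnd ℂ) (cSM α β) = cSM α β + Complex.I * α := by
  rw [cSM_eq]
  rw [map_div₀, map_sub]
  simp only [Complex.conj_I, Complex.conj_ofReal, map_neg, map_mul,
    map_ofNat]
  ring

lemma cSM_ne (hα : α ≠ 0) : cSM α β ≠ 0 := by
  rw [cSM_eq]
  intro h
  rw [div_eq_zero_iff] at h
  rcases h with h | h
  · have := congrArg Complex.im h
    simp at this
    exact hα this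
  · norm_num at h

lemma conjc_ne (hα : α ≠ 0) : (starRingEnd ℂ) (cSM α β) ≠ 0 := by
  simpa using cSM_ne α β hα

lemma m_ne (hα : α ≠ 0) : (-(Complex.I * (α:ℂ))) ≠ 0 := by
  simp [Complex.I_ne_zero, hα]

lemma e_ne (S : ι) : e S ≠ 0 := by
  intro h
  have := congrFun h S
  simp [e_apply] at this

end Scalars

example (α β : ℝ) (hα : α ≠ 0) : True := by
  have hiff : ∀ S : ι, (pdeg S = 1 ∧ qdeg S = 1) ↔ S ∈ ({{0,2},{0,3},{1,2},{1,3}} : Finset ι) := by decide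
  trivial
section MoreInfra
variable (α β : ℝ)

lemma pair_zero_span (x : V) : Submodule.span ℂ ({x, 0} : Set V) = Submodule.span ℂ {x} := by
  rw [Set.pair_comm, Submodule.span_insert_zero]

lemma mem_span_of_smul_mem {a : ℂ} (ha : a ≠ 0) {x : V} {s : Set V}
    (h : a • x ∈ Submodule.span ℂ s) : x ∈ Submodule.span ℂ s := by
  rw [show x = a⁻¹ • (a • x) from by rw [smul_smul, inv_mul_cancel₀ ha, one_smul]]
  exact Submodule.smul_mem _ _ h

lemma span_singleton_smul {a : ℂ} (ha : a ≠ 0) (x : V) :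
    Submodule.span ℂ ({a • x} : Set V) = Submodule.span ℂ {x} := by
  apply le_antisymm
  · rw [Submodule.span_le, Set.singleton_subset_iff]
    exact Submodule.smul_mem _ _ (Submodule.mem_span_singleton_self x)
  · rw [Submodule.span_le, Set.singleton_subset_iff]
    exact mem_span_of_smul_mem ha (Submodule.subset_span rfl)

lemma rank_triple {u v w : V} (h : LinearIndependent ℂ ![u, v, w]) :
    finrank ℂ (Submodule.span ℂ ({u, v, w} : Set V)) = 3 := by
  have h2 := finrank_span_eq_card h
  have h3 : Set.range ![u, v, w] = {u, v, w} := by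
    simp only [Matrix.range_cons, Matrix.range_empty, Set.union_insert, Set.union_singleton]
    ext y; simp [Set.mem_insert_iff]; tauto
  rw [h3] at h2
  simpa using h2

lemma rank_quad {u v w x : V} (h : LinearIndependent ℂ ![u, v, w, x]) :
    finrank ℂ (Submodule.span ℂ ({u, v, w, x} : Set V)) = 4 := by
  have h2 := finrank_span_eq_card h
  have h3 : Set.range ![u, v, w, x] = {u, v, w, x} := by
    simp only [Matrix.range_cons, Matrix.range_empty, Set.union_insert, Set.union_singleton]
    ext y; simp [Set.mem_insert_iff]; tauto
  rw [h3] at h2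
  simpa using h2

lemma linInd_e_pair {A B : ι} (hAB : A ≠ B) : LinearIndependent ℂ ![e A, e B] := by
  have h : Function.Injective ![A, B] := by
    intro i j hij
    fin_cases i <;> fin_cases j <;> simp_all <;> exact absurd hij (by simpa using hAB.symm)
  have := linInd_e ![A, B] h
  have heq : (fun i => e (![A, B] i)) = ![e A, e B] := by
    funext i; fin_cases i <;> rfl
  rwa [heq] at this

lemma linInd_e_quad {A B C D : ι} (h1 : A ≠ B) (h2 : A ≠ C) (h3 : A ≠ D)
    (h4 : B ≠ C) (h5 : B ≠ D) (h6 : C ≠ D) : LinearIndependent ℂ ![e A, e B, e C, e D] := by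
  have h : Function.Injective ![A, B, C, D] := by
    intro i j hij
    fin_cases i <;> fin_cases j <;> simp_all
  have := linInd_e ![A, B, C, D] h
  have heq : (fun i => e (![A, B, C, D] i)) = ![e A, e B, e C, e D] := by
    funext i; fin_cases i <;> rfl
  rwa [heq] at this

lemma delbar_e012' : delbarSM α β (e ({0,1,2} : ι)) = 0 := by
  rw [delbar_e012, show -cSM α β + (-(Complex.I * (α:ℂ))) + (starRingEnd ℂ) (cSM α β) = 0 from by
    rw [conj_cSM]; ring, zero_smul]

lemma del_e023' : delSM α β (e ({0,2,3} : ι)) = 0 := by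
  rw [del_e023, show cSM α β - (starRingEnd ℂ) (cSM α β) - (-(Complex.I * (α:ℂ))) = 0 from by
    rw [conj_cSM]; ring, zero_smul]

lemma hne1 (hα : α ≠ 0) : cSM α β - (starRingEnd ℂ) (cSM α β) ≠ 0 := by
  rw [conj_cSM]; ring_nf; simpa using m_ne α hα

lemma hne2 (hα : α ≠ 0) : cSM α β - -(Complex.I * (α:ℂ)) ≠ 0 := by
  have h := conjc_ne α β hα
  rw [conj_cSM] at h
  intro hh; apply h; rw [← hh]; ring

lemma hne3 (hα : α ≠ 0) : -(-(Complex.I * (α:ℂ))) - (starRingEnd ℂ) (cSM α β) ≠ 0 := by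
  rw [conj_cSM]
  intro h
  apply cSM_ne α β hα
  linear_combination -h

lemma hne4 (hα : α ≠ 0) : (starRingEnd ℂ) (cSM α β) + (-(Complex.I * (α:ℂ))) ≠ 0 := by
  rw [conj_cSM]
  intro h
  apply cSM_ne α β hα
  linear_combination h

end MoreInfra
section SpanIds
variable (α β : ℝ)

lemma Apq_eq_span (p q : ℕ) (Ls : Set ι) (L : Set V)
    (h1 : {S : ι | pdeg S = p ∧ qdeg S = q} = Ls) (h2 : e '' Ls = L) :
    Apq p q = Submodule.span ℂ L := by rw [Apq, h1, h2]

lemma Ak_eq_span (k : ℕ) (Ls : Set ι) (L : Set V)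
    (h1 : {S : ι | S.card = k} = Ls) (h2 : e '' Ls = L) :
    Ak k = Submodule.span ℂ L := by rw [Ak, h1, h2]

lemma hA00 : Apq 0 0 = Submodule.span ℂ {e (∅ : ι)} :=
  Apq_eq_span 0 0 {∅} _
    (Set.ext fun S => by
      simpa using (by decide : ∀ T : ι, (pdeg T = 0 ∧ qdeg T = 0) ↔ T = ∅) S)
    (by simp)

lemma hA10 : Apq 1 0 = Submodule.span ℂ {e ({0} : ι), e ({1} : ι)} :=
  Apq_eq_span 1 0 {{0}, {1}} _
    (Set.ext fun S => by
      simpa using (by decide : ∀ T : ι, (pdeg T = 1 ∧ qdeg T = 0) ↔ (T = {0} ∨ T = {1})) S)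
    (by simp [Set.image_insert_eq])

lemma hA01 : Apq 0 1 = Submodule.span ℂ {e ({2} : ι), e ({3} : ι)} :=
  Apq_eq_span 0 1 {{2}, {3}} _
    (Set.ext fun S => by
      simpa using (by decide : ∀ T : ι, (pdeg T = 0 ∧ qdeg T = 1) ↔ (T = {2} ∨ T = {3})) S)
    (by simp [Set.image_insert_eq])

lemma hAk0 : Ak 0 = Submodule.span ℂ {e (∅ : ι)} :=
  Ak_eq_span 0 {∅} _
    (Set.ext fun S => by
      simpa using (by decide : ∀ T : ι, T.card = 0 ↔ T = ∅) S)
    (by simp)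

lemma hAk1 : Ak 1 = Submodule.span ℂ
    {e ({0} : ι), e ({1} : ι), e ({2} : ι), e ({3} : ι)} :=
  Ak_eq_span 1 {{0}, {1}, {2}, {3}} _
    (Set.ext fun S => by
      simpa using (by decide : ∀ T : ι, T.card = 1 ↔
        (T = {0} ∨ T = {1} ∨ T = {2} ∨ T = {3})) S)
    (by simp [Set.image_insert_eq])

lemma hAk2 : Ak 2 = Submodule.span ℂ
    {e ({0,1} : ι), e ({0,2} : ι), e ({0,3} : ι), e ({1,2} : ι), e ({1,3} : ι), e ({2,3} : ι)} :=
  Ak_eq_span 2 {{0,1}, {0,2}, {0,3}, {1,2}, {1,3}, {2,3}} _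
    (Set.ext fun S => by
      simpa using (by decide : ∀ T : ι, T.card = 2 ↔
        (T = {0,1} ∨ T = {0,2} ∨ T = {0,3} ∨ T = {1,2} ∨ T = {1,3} ∨ T = {2,3})) S)
    (by simp [Set.image_insert_eq])

end SpanIds
section Groups
variable (α β : ℝ)

lemma hBC11 (hα : α ≠ 0) : hBC (delSM α β) (delbarSM α β) 1 1 = 1 := by
  have hN : Apq 1 1 ⊓ LinearMap.ker (delSM α β) ⊓ LinearMap.ker (delbarSM α β)
      = Submodule.span ℂ {e ({1,3} : ι)} := by
    apply le_antisymm
    · rintro v ⟨⟨hA, hk1⟩, hk2⟩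
      have hsupp := Apq_le_supp 1 1 hA
      have hiff : ∀ S : ι, (pdeg S = 1 ∧ qdeg S = 1) ↔
          S ∈ ({{0,2},{0,3},{1,2},{1,3}} : Finset ι) := by decide
      have hdec := decomp _ _ hiff v hsupp
      rw [Finset.sum_insert (by decide), Finset.sum_insert (by decide),
        Finset.sum_insert (by decide), Finset.sum_singleton] at hdec
      simp only [SetLike.mem_coe, LinearMap.mem_ker] at hk1 hk2
      have hk1' : delSM α β (v {0,2} • e {0,2} + (v {0,3} • e {0,3} +
          (v {1,2} • e {1,2} + v {1,3} • e {1,3}))) = 0 := by rw [← hdec]; exact hk1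
      have hk2' : delbarSM α β (v {0,2} • e {0,2} + (v {0,3} • e {0,3} +
          (v {1,2} • e {1,2} + v {1,3} • e {1,3}))) = 0 := by rw [← hdec]; exact hk2
      simp only [map_add, map_smul, del_e02, del_e03, del_e12, del_e13,
        smul_zero, add_zero] at hk1'
      simp only [map_add, map_smul, delbar_e02, delbar_e03, delbar_e12, delbar_e13,
        smul_zero, add_zero, zero_add] at hk2'
      have h02 : v {0,2} = 0 := by
        have h1 := congrFun hk1' ({0,1,2} : ι)
        simp (config := { decide := true }) only [Pi.add_apply, Pi.smul_apply, e_apply,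
          smul_eq_mul, Pi.zero_apply, if_true, if_false, mul_one, mul_zero, add_zero, zero_add] at h1
        have hne : cSM α β - (starRingEnd ℂ) (cSM α β) ≠ 0 := by
          rw [conj_cSM]; ring_nf; simpa using m_ne α hα
        exact (mul_eq_zero.mp h1).resolve_right hne
      have h03 : v {0,3} = 0 := by
        have h1 := congrFun hk1' ({0,1,3} : ι)
        simp (config := { decide := true }) only [Pi.add_apply, Pi.smul_apply, e_apply,
          smul_eq_mul, Pi.zero_apply, if_true, if_false, mul_one, mul_zero, add_zero, zero_add] at h1
        have hne : cSM α β - -(Complex.I * α) ≠ 0 := by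
          have := conjc_ne α β hα
          rw [conj_cSM] at this
          intro h; apply this; rw [← h]; ring
        exact (mul_eq_zero.mp h1).resolve_right hne
      have h12 : v {1,2} = 0 := by
        have h1 := congrFun hk2' ({1,2,3} : ι)
        simp (config := { decide := true }) only [Pi.add_apply, Pi.smul_apply, e_apply,
          smul_eq_mul, Pi.zero_apply, if_true, if_false, mul_one, mul_zero, add_zero, zero_add] at h1
        have hne : -(-(Complex.I * α)) - (starRingEnd ℂ) (cSM α β) ≠ 0 := by
          rw [conj_cSM]
          intro h
          apply cSM_ne α β hα
          have : cSM α β = -(-(Complex.I * α)) - Complex.I * α - 0 := by rw [← h]; ring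
          simpa using this
        exact (mul_eq_zero.mp h1).resolve_right hne
      rw [hdec, h02, h03, h12]
      simp only [zero_smul, zero_add]
      exact Submodule.smul_mem _ _ (Submodule.mem_span_singleton_self _)
    · rw [Submodule.span_le, Set.singleton_subset_iff]
      refine ⟨⟨?_, ?_⟩, ?_⟩
      · exact Submodule.subset_span ⟨{1,3}, by decide, rfl⟩
      · exact LinearMap.mem_ker.mpr (del_e13 α β)
      · exact LinearMap.mem_ker.mpr (delbar_e13 α β)
  have hA00 : Apq 0 0 = Submodule.span ℂ {e (∅:ι)} := by
    rw [Apq]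
    congr 1
    rw [show {S : ι | pdeg S = 0 ∧ qdeg S = 0} = ({∅} : Set ι) from
      Set.ext fun S => by simpa using (by decide : ∀ T : ι,
        (pdeg T = 0 ∧ qdeg T = 0) ↔ T = ∅) S]
    simp
  have hDrank : finrank ℂ ↥((Submodule.map ((delSM α β) ∘ₗ (delbarSM α β)) (Apq (1-1) (1-1))) ⊓
      (Apq 1 1 ⊓ LinearMap.ker (delSM α β) ⊓ LinearMap.ker (delbarSM α β))) = 0 := by
    have hD : Submodule.map ((delSM α β) ∘ₗ (delbarSM α β)) (Apq 0 0) = ⊥ := by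
      rw [hA00, Submodule.map_span, Set.image_singleton, LinearMap.comp_apply,
        delbar_eE, map_zero, Submodule.span_zero_singleton]
    rw [show (1-1 : ℕ) = 0 from rfl, hD, bot_inf_eq, finrank_bot]
  have hNrank : finrank ℂ ↥(Apq 1 1 ⊓ LinearMap.ker (delSM α β) ⊓ LinearMap.ker (delbarSM α β)) = 1 := by
    rw [hN]
    exact finrank_span_singleton (e_ne _)
  exact quot_rank hNrank hDrank

end Groups
section BotGroups
variable (α β : ℝ)

lemma hBC10 (hα : α ≠ 0) : hBC (delSM α β) (delbarSM α β) 1 0 = 0 := by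
  have hN : Apq 1 0 ⊓ LinearMap.ker (delSM α β) ⊓ LinearMap.ker (delbarSM α β) = ⊥ := by
    apply le_antisymm _ bot_le
    rintro v ⟨⟨hA, hk1⟩, hk2⟩
    have hsupp := Apq_le_supp 1 0 hA
    have hiff : ∀ S : ι, (pdeg S = 1 ∧ qdeg S = 0) ↔
        S ∈ ({{0},{1}} : Finset ι) := by decide
    have hdec := decomp _ _ hiff v hsupp
    rw [Finset.sum_insert (by decide), Finset.sum_singleton] at hdec
    simp only [SetLike.mem_coe, LinearMap.mem_ker] at hk1 hk2
    have hk1' : delSM α β (v {0} • e {0} + v {1} • e {1}) = 0 := by rw [← hdec]; exact hk1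
    have hk2' : delbarSM α β (v {0} • e {0} + v {1} • e {1}) = 0 := by rw [← hdec]; exact hk2
    simp only [map_add, map_smul, del_e0, del_e1, smul_zero, add_zero] at hk1'
    simp only [map_add, map_smul, delbar_e0, delbar_e1] at hk2'
    have h0 : v {0} = 0 := by
      have h1 := congrFun hk1' ({0,1} : ι)
      simp (config := { decide := true }) only [Pi.add_apply, Pi.smul_apply, e_apply,
        smul_eq_mul, Pi.zero_apply, if_true, if_false, mul_one, mul_zero, add_zero, zero_add] at h1
      exact (mul_eq_zero.mp h1).resolve_right (cSM_ne α β hα)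
    have h1 : v {1} = 0 := by
      have h1 := congrFun hk2' ({1,3} : ι)
      simp (config := { decide := true }) only [Pi.add_apply, Pi.smul_apply, e_apply,
        smul_eq_mul, Pi.zero_apply, if_true, if_false, mul_one, mul_zero, add_zero, zero_add] at h1
      exact (mul_eq_zero.mp h1).resolve_right (m_ne α hα)
    rw [Submodule.mem_bot, hdec, h0, h1]
    simp
  have hNrank : finrank ℂ ↥(Apq 1 0 ⊓ LinearMap.ker (delSM α β) ⊓ LinearMap.ker (delbarSM α β)) = 0 := by
    rw [hN]; exact finrank_bot ℂ V
  have hDrank : finrank ℂ ↥((Submodule.map ((delSM α β) ∘ₗ (delbarSM α β)) (Apq (1-1) (0-1))) ⊓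
      (Apq 1 0 ⊓ LinearMap.ker (delSM α β) ⊓ LinearMap.ker (delbarSM α β))) = 0 := by
    rw [hN, inf_bot_eq]; exact finrank_bot ℂ V
  exact quot_rank hNrank hDrank

lemma hBC01 (hα : α ≠ 0) : hBC (delSM α β) (delbarSM α β) 0 1 = 0 := by
  have hN : Apq 0 1 ⊓ LinearMap.ker (delSM α β) ⊓ LinearMap.ker (delbarSM α β) = ⊥ := by
    apply le_antisymm _ bot_le
    rintro v ⟨⟨hA, hk1⟩, hk2⟩
    have hsupp := Apq_le_supp 0 1 hA
    have hiff : ∀ S : ι, (pdeg S = 0 ∧ qdeg S = 1) ↔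
        S ∈ ({{2},{3}} : Finset ι) := by decide
    have hdec := decomp _ _ hiff v hsupp
    rw [Finset.sum_insert (by decide), Finset.sum_singleton] at hdec
    simp only [SetLike.mem_coe, LinearMap.mem_ker] at hk1 hk2
    have hk1' : delSM α β (v {2} • e {2} + v {3} • e {3}) = 0 := by rw [← hdec]; exact hk1
    simp only [map_add, map_smul, del_e2, del_e3] at hk1'
    have h2 : v {2} = 0 := by
      have h1 := congrFun hk1' ({1,2} : ι)
      simp (config := { decide := true }) only [Pi.add_apply, Pi.smul_apply, e_apply,
        smul_eq_mul, Pi.zero_apply, if_true, if_false, mul_one, mul_zero, add_zero, zero_add] at h1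
      exact (mul_eq_zero.mp h1).resolve_right (conjc_ne α β hα)
    have h3 : v {3} = 0 := by
      have h1 := congrFun hk1' ({1,3} : ι)
      simp (config := { decide := true }) only [Pi.add_apply, Pi.smul_apply, e_apply,
        smul_eq_mul, Pi.zero_apply, if_true, if_false, mul_one, mul_zero, add_zero, zero_add] at h1
      exact (mul_eq_zero.mp h1).resolve_right (m_ne α hα)
    rw [Submodule.mem_bot, hdec, h2, h3]
    simp
  have hNrank : finrank ℂ ↥(Apq 0 1 ⊓ LinearMap.ker (delSM α β) ⊓ LinearMap.ker (delbarSM α β)) = 0 := by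
    rw [hN]; exact finrank_bot ℂ V
  have hDrank : finrank ℂ ↥((Submodule.map ((delSM α β) ∘ₗ (delbarSM α β)) (Apq (0-1) (1-1))) ⊓
      (Apq 0 1 ⊓ LinearMap.ker (delSM α β) ⊓ LinearMap.ker (delbarSM α β))) = 0 := by
    rw [hN, inf_bot_eq]; exact finrank_bot ℂ V
  exact quot_rank hNrank hDrank

lemma hBC20 (hα : α ≠ 0) : hBC (delSM α β) (delbarSM α β) 2 0 = 0 := by
  have hN : Apq 2 0 ⊓ LinearMap.ker (delSM α β) ⊓ LinearMap.ker (delbarSM α β) = ⊥ := by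
    apply le_antisymm _ bot_le
    rintro v ⟨⟨hA, hk1⟩, hk2⟩
    have hsupp := Apq_le_supp 2 0 hA
    have hiff : ∀ S : ι, (pdeg S = 2 ∧ qdeg S = 0) ↔
        S ∈ ({{0,1}} : Finset ι) := by decide
    have hdec := decomp _ _ hiff v hsupp
    rw [Finset.sum_singleton] at hdec
    simp only [SetLike.mem_coe, LinearMap.mem_ker] at hk1 hk2
    have hk2' : delbarSM α β (v {0,1} • e {0,1}) = 0 := by rw [← hdec]; exact hk2
    simp only [map_smul, delbar_e01] at hk2'
    have h01 : v {0,1} = 0 := by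
      have h1 := congrFun hk2' ({0,1,3} : ι)
      simp (config := { decide := true }) only [Pi.smul_apply, e_apply,
        smul_eq_mul, Pi.zero_apply, if_true, if_false, mul_one, mul_zero] at h1
      exact (mul_eq_zero.mp h1).resolve_right (hne2 α β hα)
    rw [Submodule.mem_bot, hdec, h01]
    simp
  have hNrank : finrank ℂ ↥(Apq 2 0 ⊓ LinearMap.ker (delSM α β) ⊓ LinearMap.ker (delbarSM α β)) = 0 := by
    rw [hN]; exact finrank_bot ℂ V
  have hDrank : finrank ℂ ↥((Submodule.map ((delSM α β) ∘ₗ (delbarSM α β)) (Apq (2-1) (0-1))) ⊓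
      (Apq 2 0 ⊓ LinearMap.ker (delSM α β) ⊓ LinearMap.ker (delbarSM α β))) = 0 := by
    rw [hN, inf_bot_eq]; exact finrank_bot ℂ V
  exact quot_rank hNrank hDrank

lemma hBC02 (hα : α ≠ 0) : hBC (delSM α β) (delbarSM α β) 0 2 = 0 := by
  have hN : Apq 0 2 ⊓ LinearMap.ker (delSM α β) ⊓ LinearMap.ker (delbarSM α β) = ⊥ := by
    apply le_antisymm _ bot_le
    rintro v ⟨⟨hA, hk1⟩, hk2⟩
    have hsupp := Apq_le_supp 0 2 hA
    have hiff : ∀ S : ι, (pdeg S = 0 ∧ qdeg S = 2) ↔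
        S ∈ ({{2,3}} : Finset ι) := by decide
    have hdec := decomp _ _ hiff v hsupp
    rw [Finset.sum_singleton] at hdec
    simp only [SetLike.mem_coe, LinearMap.mem_ker] at hk1 hk2
    have hk1' : delSM α β (v {2,3} • e {2,3}) = 0 := by rw [← hdec]; exact hk1
    simp only [map_smul, del_e23] at hk1'
    have h23 : v {2,3} = 0 := by
      have h1 := congrFun hk1' ({1,2,3} : ι)
      simp (config := { decide := true }) only [Pi.smul_apply, e_apply,
        smul_eq_mul, Pi.zero_apply, if_true, if_false, mul_one, mul_zero] at h1
      exact (mul_eq_zero.mp h1).resolve_right (hne4 α β hα)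
    rw [Submodule.mem_bot, hdec, h23]
    simp
  have hNrank : finrank ℂ ↥(Apq 0 2 ⊓ LinearMap.ker (delSM α β) ⊓ LinearMap.ker (delbarSM α β)) = 0 := by
    rw [hN]; exact finrank_bot ℂ V
  have hDrank : finrank ℂ ↥((Submodule.map ((delSM α β) ∘ₗ (delbarSM α β)) (Apq (0-1) (2-1))) ⊓
      (Apq 0 2 ⊓ LinearMap.ker (delSM α β) ⊓ LinearMap.ker (delbarSM α β))) = 0 := by
    rw [hN, inf_bot_eq]; exact finrank_bot ℂ V
  exact quot_rank hNrank hDrank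

end BotGroups
section Groups21
variable (α β : ℝ)

lemma hBC21 (hα : α ≠ 0) : hBC (delSM α β) (delbarSM α β) 2 1 = 1 := by
  have hN : Apq 2 1 ⊓ LinearMap.ker (delSM α β) ⊓ LinearMap.ker (delbarSM α β)
      = Submodule.span ℂ {e ({0,1,2} : ι), e ({0,1,3} : ι)} := by
    apply le_antisymm
    · rintro v ⟨⟨hA, hk1⟩, hk2⟩
      have hsupp := Apq_le_supp 2 1 hA
      have hiff : ∀ S : ι, (pdeg S = 2 ∧ qdeg S = 1) ↔
          S ∈ ({{0,1,2},{0,1,3}} : Finset ι) := by decide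
      have hdec := decomp _ _ hiff v hsupp
      rw [Finset.sum_insert (by decide), Finset.sum_singleton] at hdec
      rw [hdec]
      exact add_mem (Submodule.smul_mem _ _ (Submodule.subset_span (Set.mem_insert _ _)))
        (Submodule.smul_mem _ _ (Submodule.subset_span (Set.mem_insert_of_mem _ rfl)))
    · rw [Submodule.span_le]
      rintro x (rfl | rfl)
      · exact ⟨⟨Submodule.subset_span ⟨{0,1,2}, by decide, rfl⟩,
          LinearMap.mem_ker.mpr (del_e012 α β)⟩,
          LinearMap.mem_ker.mpr (delbar_e012' α β)⟩
      · exact ⟨⟨Submodule.subset_span ⟨{0,1,3}, by decide, rfl⟩,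
          LinearMap.mem_ker.mpr (del_e013 α β)⟩,
          LinearMap.mem_ker.mpr (delbar_e013 α β)⟩
  have hD : Submodule.map ((delSM α β) ∘ₗ (delbarSM α β)) (Apq (2-1) (1-1))
      = Submodule.span ℂ {e ({0,1,3} : ι)} := by
    rw [show ((2:ℕ)-1) = 1 from rfl, show ((1:ℕ)-1) = 0 from rfl, hA10,
      Submodule.map_span, Set.image_pair]
    have c0 : ((delSM α β) ∘ₗ (delbarSM α β)) (e {0})
        = (-cSM α β * (cSM α β - (-(Complex.I * (α:ℂ))))) • e ({0,1,3} : ι) := by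
      rw [LinearMap.comp_apply, delbar_e0, map_smul, del_e03, smul_smul]
    have c1 : ((delSM α β) ∘ₗ (delbarSM α β)) (e {1}) = 0 := by
      rw [LinearMap.comp_apply, delbar_e1, map_smul, del_e13, smul_zero]
    rw [c0, c1, pair_zero_span, span_singleton_smul
      (mul_ne_zero (neg_ne_zero.mpr (cSM_ne α β hα)) (hne2 α β hα))]
  have hNrank : finrank ℂ ↥(Apq 2 1 ⊓ LinearMap.ker (delSM α β) ⊓ LinearMap.ker (delbarSM α β)) = 2 := by
    rw [hN]; exact rank_pair (linInd_e_pair (by decide))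
  have hDrank : finrank ℂ ↥((Submodule.map ((delSM α β) ∘ₗ (delbarSM α β)) (Apq (2-1) (1-1))) ⊓
      (Apq 2 1 ⊓ LinearMap.ker (delSM α β) ⊓ LinearMap.ker (delbarSM α β))) = 1 := by
    rw [hD, hN, inf_eq_left.mpr (by
      rw [Submodule.span_le, Set.singleton_subset_iff]
      exact Submodule.subset_span (Set.mem_insert_of_mem _ rfl))]
    exact finrank_span_singleton (e_ne _)
  exact quot_rank hNrank hDrank

lemma hBC12 (hα : α ≠ 0) : hBC (delSM α β) (delbarSM α β) 1 2 = 1 := by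
  have hN : Apq 1 2 ⊓ LinearMap.ker (delSM α β) ⊓ LinearMap.ker (delbarSM α β)
      = Submodule.span ℂ {e ({0,2,3} : ι), e ({1,2,3} : ι)} := by
    apply le_antisymm
    · rintro v ⟨⟨hA, hk1⟩, hk2⟩
      have hsupp := Apq_le_supp 1 2 hA
      have hiff : ∀ S : ι, (pdeg S = 1 ∧ qdeg S = 2) ↔
          S ∈ ({{0,2,3},{1,2,3}} : Finset ι) := by decide
      have hdec := decomp _ _ hiff v hsupp
      rw [Finset.sum_insert (by decide), Finset.sum_singleton] at hdec
      rw [hdec]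
      exact add_mem (Submodule.smul_mem _ _ (Submodule.subset_span (Set.mem_insert _ _)))
        (Submodule.smul_mem _ _ (Submodule.subset_span (Set.mem_insert_of_mem _ rfl)))
    · rw [Submodule.span_le]
      rintro x (rfl | rfl)
      · exact ⟨⟨Submodule.subset_span ⟨{0,2,3}, by decide, rfl⟩,
          LinearMap.mem_ker.mpr (del_e023' α β)⟩,
          LinearMap.mem_ker.mpr (delbar_e023 α β)⟩
      · exact ⟨⟨Submodule.subset_span ⟨{1,2,3}, by decide, rfl⟩,
          LinearMap.mem_ker.mpr (del_e123 α β)⟩,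
          LinearMap.mem_ker.mpr (delbar_e123 α β)⟩
  have hD : Submodule.map ((delSM α β) ∘ₗ (delbarSM α β)) (Apq (1-1) (2-1))
      = Submodule.span ℂ {e ({1,2,3} : ι)} := by
    rw [show ((1:ℕ)-1) = 0 from rfl, show ((2:ℕ)-1) = 1 from rfl, hA01,
      Submodule.map_span, Set.image_pair]
    have c2 : ((delSM α β) ∘ₗ (delbarSM α β)) (e {2})
        = ((starRingEnd ℂ) (cSM α β) * ((starRingEnd ℂ) (cSM α β) + (-(Complex.I * (α:ℂ)))))
          • e ({1,2,3} : ι) := by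
      rw [LinearMap.comp_apply, delbar_e2, map_smul, del_e23, smul_smul]
    have c3 : ((delSM α β) ∘ₗ (delbarSM α β)) (e {3}) = 0 := by
      rw [LinearMap.comp_apply, delbar_e3, map_zero]
    rw [c2, c3, pair_zero_span, span_singleton_smul
      (mul_ne_zero (conjc_ne α β hα) (hne4 α β hα))]
  have hNrank : finrank ℂ ↥(Apq 1 2 ⊓ LinearMap.ker (delSM α β) ⊓ LinearMap.ker (delbarSM α β)) = 2 := by
    rw [hN]; exact rank_pair (linInd_e_pair (by decide))
  have hDrank : finrank ℂ ↥((Submodule.map ((delSM α β) ∘ₗ (delbarSM α β)) (Apq (1-1) (2-1))) ⊓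
      (Apq 1 2 ⊓ LinearMap.ker (delSM α β) ⊓ LinearMap.ker (delbarSM α β))) = 1 := by
    rw [hD, hN, inf_eq_left.mpr (by
      rw [Submodule.span_le, Set.singleton_subset_iff]
      exact Submodule.subset_span (Set.mem_insert_of_mem _ rfl))]
    exact finrank_span_singleton (e_ne _)
  exact quot_rank hNrank hDrank

end Groups21
section Betti
variable (α β : ℝ)

lemma hmap0 : Submodule.map (dSM α β) (Ak 0) = ⊥ := by
  rw [hAk0, Submodule.map_span, Set.image_singleton,
    show dSM α β (e ∅) = 0 from by
      simp only [dSM, LinearMap.add_apply, del_eE, delbar_eE, add_zero],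
    Submodule.span_zero_singleton]

lemma betti1_span (hα : α ≠ 0) : Ak 1 ⊓ LinearMap.ker (dSM α β)
    = Submodule.span ℂ {e ({1} : ι) - e ({3} : ι)} := by
  apply le_antisymm
  · rintro v ⟨hA, hk⟩
    have hsupp := Ak_le_supp 1 hA
    have hiff : ∀ S : ι, S.card = 1 ↔ S ∈ ({{0},{1},{2},{3}} : Finset ι) := by decide
    have hdec := decomp _ _ hiff v hsupp
    rw [Finset.sum_insert (by decide), Finset.sum_insert (by decide),
      Finset.sum_insert (by decide), Finset.sum_singleton] at hdec
    simp only [SetLike.mem_coe, LinearMap.mem_ker] at hk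
    have hk' : dSM α β (v {0} • e {0} + (v {1} • e {1} + (v {2} • e {2} + v {3} • e {3}))) = 0 := by
      rw [← hdec]; exact hk
    simp only [dSM, LinearMap.add_apply, map_add, map_smul, del_e0, del_e1, del_e2, del_e3,
      delbar_e0, delbar_e1, delbar_e2, delbar_e3, smul_zero, add_zero, zero_add] at hk'
    have h0 : v {0} = 0 := by
      have h1 := congrFun hk' ({0,1} : ι)
      simp (config := { decide := true }) only [Pi.add_apply, Pi.smul_apply, e_apply,
        smul_eq_mul, Pi.zero_apply, if_true, if_false, mul_one, mul_zero, add_zero, zero_add] at h1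
      exact (mul_eq_zero.mp h1).resolve_right (cSM_ne α β hα)
    have h2 : v {2} = 0 := by
      have h1 := congrFun hk' ({1,2} : ι)
      simp (config := { decide := true }) only [Pi.add_apply, Pi.smul_apply, e_apply,
        smul_eq_mul, Pi.zero_apply, if_true, if_false, mul_one, mul_zero, add_zero, zero_add] at h1
      exact (mul_eq_zero.mp h1).resolve_right (conjc_ne α β hα)
    have h3 : v {3} = - v {1} := by
      have h1 := congrFun hk' ({1,3} : ι)
      simp (config := { decide := true }) only [Pi.add_apply, Pi.smul_apply, e_apply,
        smul_eq_mul, Pi.zero_apply, if_true, if_false, mul_one, mul_zero, add_zero, zero_add] at h1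
      have hsum : (v {1} + v {3}) * (-(Complex.I * (α:ℂ))) = 0 := by linear_combination h1
      have h := (mul_eq_zero.mp hsum).resolve_right (m_ne α hα)
      linear_combination h
    rw [hdec, h0, h2, h3,
      show (0:ℂ) • e {0} + (v {1} • e {1} + ((0:ℂ) • e {2} + (-v {1}) • e ({3} : ι)))
        = v {1} • (e {1} - e {3}) from by module]
    exact Submodule.smul_mem _ _ (Submodule.mem_span_singleton_self _)
  · rw [Submodule.span_le, Set.singleton_subset_iff]
    refine ⟨sub_mem (Submodule.subset_span ⟨{1}, by decide, rfl⟩)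
      (Submodule.subset_span ⟨{3}, by decide, rfl⟩), LinearMap.mem_ker.mpr ?_⟩
    rw [map_sub]
    simp only [dSM, LinearMap.add_apply, del_e1, del_e3, delbar_e1, delbar_e3,
      zero_add, add_zero]
    exact sub_self _

lemma betti1 (hα : α ≠ 0) : betti (dSM α β) 1 = 1 := by
  have hne : e ({1} : ι) - e ({3} : ι) ≠ 0 := by
    intro h
    have h2 := congrFun h ({1} : ι)
    simp (config := { decide := true }) only [Pi.sub_apply, e_apply, Pi.zero_apply,
      if_true, if_false] at h2
    norm_num at h2
  have hNrank : finrank ℂ ↥(Ak 1 ⊓ LinearMap.ker (dSM α β)) = 1 := by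
    rw [betti1_span α β hα]
    exact finrank_span_singleton hne
  have hDrank : finrank ℂ ↥((Submodule.map (dSM α β) (Ak (1-1))) ⊓
      (Ak 1 ⊓ LinearMap.ker (dSM α β))) = 0 := by
    rw [show ((1:ℕ)-1) = 0 from rfl, hmap0, bot_inf_eq]
    exact finrank_bot ℂ V
  exact quot_rank hNrank hDrank

lemma betti2_ker (hα : α ≠ 0) : Ak 2 ⊓ LinearMap.ker (dSM α β)
    = Submodule.span ℂ {e ({0,1} : ι) - e ({0,3} : ι), e ({1,3} : ι),
        e ({1,2} : ι) + e ({2,3} : ι)} := by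
  apply le_antisymm
  · rintro v ⟨hA, hk⟩
    have hsupp := Ak_le_supp 2 hA
    have hiff : ∀ S : ι, S.card = 2 ↔
        S ∈ ({{0,1},{0,2},{0,3},{1,2},{1,3},{2,3}} : Finset ι) := by decide
    have hdec := decomp _ _ hiff v hsupp
    rw [Finset.sum_insert (by decide), Finset.sum_insert (by decide),
      Finset.sum_insert (by decide), Finset.sum_insert (by decide),
      Finset.sum_insert (by decide), Finset.sum_singleton] at hdec
    simp only [SetLike.mem_coe, LinearMap.mem_ker] at hk
    have hk' : dSM α β (v {0,1} • e {0,1} + (v {0,2} • e {0,2} + (v {0,3} • e {0,3} +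
        (v {1,2} • e {1,2} + (v {1,3} • e {1,3} + v {2,3} • e {2,3}))))) = 0 := by
      rw [← hdec]; exact hk
    simp only [dSM, LinearMap.add_apply, map_add, map_smul, del_e01, del_e02, del_e03,
      del_e12, del_e13, del_e23, delbar_e01, delbar_e02, delbar_e03, delbar_e12,
      delbar_e13, delbar_e23, smul_zero, add_zero, zero_add] at hk'
    have h02 : v {0,2} = 0 := by
      have h1 := congrFun hk' ({0,1,2} : ι)
      simp (config := { decide := true }) only [Pi.add_apply, Pi.smul_apply, e_apply,
        smul_eq_mul, Pi.zero_apply, if_true, if_false, mul_one, mul_zero, add_zero, zero_add] at h1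
      exact (mul_eq_zero.mp h1).resolve_right (hne1 α β hα)
    have h03 : v {0,3} = - v {0,1} := by
      have h1 := congrFun hk' ({0,1,3} : ι)
      simp (config := { decide := true }) only [Pi.add_apply, Pi.smul_apply, e_apply,
        smul_eq_mul, Pi.zero_apply, if_true, if_false, mul_one, mul_zero, add_zero, zero_add] at h1
      have hsum : (v {0,1} + v {0,3}) * (cSM α β - -(Complex.I * (α:ℂ))) = 0 := by
        linear_combination h1
      have h := (mul_eq_zero.mp hsum).resolve_right (hne2 α β hα)
      linear_combination h
    have h23 : v {2,3} = v {1,2} := by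
      have h1 := congrFun hk' ({1,2,3} : ι)
      simp (config := { decide := true }) only [Pi.add_apply, Pi.smul_apply, e_apply,
        smul_eq_mul, Pi.zero_apply, if_true, if_false, mul_one, mul_zero, add_zero, zero_add] at h1
      have hsum : (v {2,3} - v {1,2}) * ((starRingEnd ℂ) (cSM α β) + (-(Complex.I * (α:ℂ)))) = 0 := by
        linear_combination h1
      have h := (mul_eq_zero.mp hsum).resolve_right (hne4 α β hα)
      linear_combination h
    rw [hdec, h02, h03, h23,
      show v {0,1} • e {0,1} + ((0:ℂ) • e {0,2} + ((- v {0,1}) • e {0,3} +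
        (v {1,2} • e {1,2} + (v {1,3} • e {1,3} + v {1,2} • e ({2,3} : ι)))))
        = v {0,1} • (e {0,1} - e {0,3}) + (v {1,3} • e {1,3}
          + v {1,2} • (e {1,2} + e {2,3})) from by module]
    refine add_mem (Submodule.smul_mem _ _ (Submodule.subset_span (Set.mem_insert _ _)))
      (add_mem (Submodule.smul_mem _ _ (Submodule.subset_span
        (Set.mem_insert_of_mem _ (Set.mem_insert _ _))))
        (Submodule.smul_mem _ _ (Submodule.subset_span
          (Set.mem_insert_of_mem _ (Set.mem_insert_of_mem _ rfl)))))
  · rw [Submodule.span_le]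
    rintro x (rfl | rfl | rfl)
    · refine ⟨sub_mem (Submodule.subset_span ⟨{0,1}, by decide, rfl⟩)
        (Submodule.subset_span ⟨{0,3}, by decide, rfl⟩), LinearMap.mem_ker.mpr ?_⟩
      rw [map_sub]
      simp only [dSM, LinearMap.add_apply, del_e01, delbar_e01, del_e03, delbar_e03,
        zero_add, add_zero]
      exact sub_self _
    · refine ⟨Submodule.subset_span ⟨{1,3}, by decide, rfl⟩, LinearMap.mem_ker.mpr ?_⟩
      simp only [dSM, LinearMap.add_apply, del_e13, delbar_e13, add_zero]
    · refine ⟨add_mem (Submodule.subset_span ⟨{1,2}, by decide, rfl⟩)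
        (Submodule.subset_span ⟨{2,3}, by decide, rfl⟩), LinearMap.mem_ker.mpr ?_⟩
      rw [map_add]
      simp only [dSM, LinearMap.add_apply, del_e12, delbar_e12, del_e23, delbar_e23,
        zero_add, add_zero]
      module

lemma betti2_im (hα : α ≠ 0) : Submodule.map (dSM α β) (Ak (2-1))
    = Submodule.span ℂ {e ({0,1} : ι) - e ({0,3} : ι), e ({1,3} : ι),
        e ({1,2} : ι) + e ({2,3} : ι)} := by
  rw [show ((2:ℕ)-1) = 1 from rfl, hAk1, Submodule.map_span,
    Set.image_insert_eq, Set.image_insert_eq, Set.image_insert_eq, Set.image_singleton]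
  have hd0 : dSM α β (e {0}) = cSM α β • (e ({0,1} : ι) - e ({0,3} : ι)) := by
    simp only [dSM, LinearMap.add_apply, del_e0, delbar_e0]; module
  have hd1 : dSM α β (e {1}) = (-(Complex.I * (α:ℂ))) • e ({1,3} : ι) := by
    simp only [dSM, LinearMap.add_apply, del_e1, delbar_e1, zero_add]
  have hd2 : dSM α β (e {2}) = (starRingEnd ℂ) (cSM α β) • (e ({1,2} : ι) + e ({2,3} : ι)) := by
    simp only [dSM, LinearMap.add_apply, del_e2, delbar_e2]; module
  have hd3 : dSM α β (e {3}) = (-(Complex.I * (α:ℂ))) • e ({1,3} : ι) := by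
    simp only [dSM, LinearMap.add_apply, del_e3, delbar_e3, add_zero]
  rw [hd0, hd1, hd2, hd3]
  apply le_antisymm
  · rw [Submodule.span_le]
    rintro x (rfl | rfl | rfl | rfl)
    · exact Submodule.smul_mem _ _ (Submodule.subset_span (Set.mem_insert _ _))
    · exact Submodule.smul_mem _ _ (Submodule.subset_span
        (Set.mem_insert_of_mem _ (Set.mem_insert _ _)))
    · exact Submodule.smul_mem _ _ (Submodule.subset_span
        (Set.mem_insert_of_mem _ (Set.mem_insert_of_mem _ rfl)))
    · exact Submodule.smul_mem _ _ (Submodule.subset_span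
        (Set.mem_insert_of_mem _ (Set.mem_insert _ _)))
  · rw [Submodule.span_le]
    rintro x (rfl | rfl | rfl)
    · exact mem_span_of_smul_mem (cSM_ne α β hα)
        (Submodule.subset_span (Set.mem_insert _ _))
    · exact mem_span_of_smul_mem (m_ne α hα)
        (Submodule.subset_span (Set.mem_insert_of_mem _ (Set.mem_insert _ _)))
    · exact mem_span_of_smul_mem (conjc_ne α β hα)
        (Submodule.subset_span (Set.mem_insert_of_mem _ (Set.mem_insert_of_mem _
          (Set.mem_insert _ _))))

lemma betti2 (hα : α ≠ 0) : betti (dSM α β) 2 = 0 := by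
  have hN := betti2_ker α β hα
  have hD := betti2_im α β hα
  have hNr : finrank ℂ ↥(Ak 2 ⊓ LinearMap.ker (dSM α β))
      = finrank ℂ ↥(Submodule.span ℂ {e ({0,1} : ι) - e ({0,3} : ι), e ({1,3} : ι),
        e ({1,2} : ι) + e ({2,3} : ι)}) := by rw [hN]
  have hIr : finrank ℂ ↥((Submodule.map (dSM α β) (Ak (2-1))) ⊓
      (Ak 2 ⊓ LinearMap.ker (dSM α β)))
      = finrank ℂ ↥(Submodule.span ℂ {e ({0,1} : ι) - e ({0,3} : ι), e ({1,3} : ι),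
        e ({1,2} : ι) + e ({2,3} : ι)}) := by rw [hD, hN, inf_idem]
  unfold betti
  rw [quot_rank hNr hIr, Nat.sub_self]

end Betti
section Betti3
variable (α β : ℝ)

lemma linInd_mixed : LinearIndependent ℂ
    ![e ({0,1,3} : ι), e ({0,1,2} : ι) + e ({0,2,3} : ι), e ({1,2,3} : ι)] := by
  rw [Fintype.linearIndependent_iff]
  intro g hg
  rw [Fin.sum_univ_three] at hg
  simp only [Matrix.cons_val_zero, Matrix.cons_val_one, Matrix.head_cons,
    Matrix.cons_val_two, Matrix.tail_cons] at hg
  have c0 := congrFun hg ({0,1,3} : ι)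
  have c1 := congrFun hg ({0,1,2} : ι)
  have c2 := congrFun hg ({1,2,3} : ι)
  simp (config := { decide := true }) only [Pi.add_apply, Pi.smul_apply, e_apply,
    smul_eq_mul, Pi.zero_apply, if_true, if_false, mul_one, mul_zero, add_zero, zero_add] at c0 c1 c2
  intro i
  fin_cases i
  · exact c0
  · exact c1
  · exact c2

lemma hAk3_ker (hα : α ≠ 0) : Ak 3 ⊓ LinearMap.ker (dSM α β)
    = Submodule.span ℂ {e ({0,1,2} : ι), e ({0,1,3} : ι), e ({0,2,3} : ι), e ({1,2,3} : ι)} := by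
  apply le_antisymm
  · rintro v ⟨hA, hk⟩
    have hsupp := Ak_le_supp 3 hA
    have hiff : ∀ S : ι, S.card = 3 ↔
        S ∈ ({{0,1,2},{0,1,3},{0,2,3},{1,2,3}} : Finset ι) := by decide
    have hdec := decomp _ _ hiff v hsupp
    rw [Finset.sum_insert (by decide), Finset.sum_insert (by decide),
      Finset.sum_insert (by decide), Finset.sum_singleton] at hdec
    rw [hdec]
    refine add_mem (Submodule.smul_mem _ _ (Submodule.subset_span (Set.mem_insert _ _)))
      (add_mem (Submodule.smul_mem _ _ (Submodule.subset_span (by simp)))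
        (add_mem (Submodule.smul_mem _ _ (Submodule.subset_span (by simp)))
          (Submodule.smul_mem _ _ (Submodule.subset_span (by simp)))))
  · rw [Submodule.span_le]
    rintro x (rfl | rfl | rfl | rfl)
    · exact ⟨Submodule.subset_span ⟨{0,1,2}, by decide, rfl⟩, LinearMap.mem_ker.mpr (by
        simp only [dSM, LinearMap.add_apply, del_e012, delbar_e012', add_zero])⟩
    · exact ⟨Submodule.subset_span ⟨{0,1,3}, by decide, rfl⟩, LinearMap.mem_ker.mpr (by
        simp only [dSM, LinearMap.add_apply, del_e013, delbar_e013, add_zero])⟩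
    · exact ⟨Submodule.subset_span ⟨{0,2,3}, by decide, rfl⟩, LinearMap.mem_ker.mpr (by
        simp only [dSM, LinearMap.add_apply, del_e023', delbar_e023, add_zero])⟩
    · exact ⟨Submodule.subset_span ⟨{1,2,3}, by decide, rfl⟩, LinearMap.mem_ker.mpr (by
        simp only [dSM, LinearMap.add_apply, del_e123, delbar_e123, add_zero])⟩

lemma betti3_im (hα : α ≠ 0) : Submodule.map (dSM α β) (Ak (3-1))
    = Submodule.span ℂ {e ({0,1,3} : ι), e ({0,1,2} : ι) + e ({0,2,3} : ι), e ({1,2,3} : ι)} := by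
  rw [show ((3:ℕ)-1) = 2 from rfl, hAk2, Submodule.map_span,
    Set.image_insert_eq, Set.image_insert_eq, Set.image_insert_eq,
    Set.image_insert_eq, Set.image_insert_eq, Set.image_singleton]
  have hd01 : dSM α β (e {0,1}) = (cSM α β - -(Complex.I * (α:ℂ))) • e ({0,1,3} : ι) := by
    simp only [dSM, LinearMap.add_apply, del_e01, delbar_e01, zero_add]
  have hd02 : dSM α β (e {0,2}) = (cSM α β - (starRingEnd ℂ) (cSM α β)) •
      (e ({0,1,2} : ι) + e ({0,2,3} : ι)) := by
    simp only [dSM, LinearMap.add_apply, del_e02, delbar_e02]; module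
  have hd03 : dSM α β (e {0,3}) = (cSM α β - -(Complex.I * (α:ℂ))) • e ({0,1,3} : ι) := by
    simp only [dSM, LinearMap.add_apply, del_e03, delbar_e03, add_zero]
  have hd12 : dSM α β (e {1,2}) = (-(-(Complex.I * (α:ℂ))) - (starRingEnd ℂ) (cSM α β)) •
      e ({1,2,3} : ι) := by
    simp only [dSM, LinearMap.add_apply, del_e12, delbar_e12, zero_add]
  have hd13 : dSM α β (e {1,3}) = 0 := by
    simp only [dSM, LinearMap.add_apply, del_e13, delbar_e13, add_zero]
  have hd23 : dSM α β (e {2,3}) = ((starRingEnd ℂ) (cSM α β) + (-(Complex.I * (α:ℂ)))) •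
      e ({1,2,3} : ι) := by
    simp only [dSM, LinearMap.add_apply, del_e23, delbar_e23, add_zero]
  rw [hd01, hd02, hd03, hd12, hd13, hd23]
  apply le_antisymm
  · rw [Submodule.span_le]
    rintro x (rfl | rfl | rfl | rfl | rfl | rfl)
    · exact Submodule.smul_mem _ _ (Submodule.subset_span (Set.mem_insert _ _))
    · exact Submodule.smul_mem _ _ (Submodule.subset_span (by simp))
    · exact Submodule.smul_mem _ _ (Submodule.subset_span (Set.mem_insert _ _))
    · exact Submodule.smul_mem _ _ (Submodule.subset_span (by simp))
    · exact zero_mem _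
    · exact Submodule.smul_mem _ _ (Submodule.subset_span (by simp))
  · rw [Submodule.span_le]
    rintro x (rfl | rfl | rfl)
    · exact mem_span_of_smul_mem (hne2 α β hα) (Submodule.subset_span (Set.mem_insert _ _))
    · exact mem_span_of_smul_mem (hne1 α β hα) (Submodule.subset_span (by simp))
    · exact mem_span_of_smul_mem (hne4 α β hα) (Submodule.subset_span (by simp))

lemma betti3 (hα : α ≠ 0) : betti (dSM α β) 3 = 1 := by
  have hNrank : finrank ℂ ↥(Ak 3 ⊓ LinearMap.ker (dSM α β)) = 4 := by
    rw [hAk3_ker α β hα]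
    exact rank_quad (linInd_e_quad (by decide) (by decide) (by decide)
      (by decide) (by decide) (by decide))
  have hle : Submodule.span ℂ {e ({0,1,3} : ι), e ({0,1,2} : ι) + e ({0,2,3} : ι),
      e ({1,2,3} : ι)} ≤ Submodule.span ℂ {e ({0,1,2} : ι), e ({0,1,3} : ι),
      e ({0,2,3} : ι), e ({1,2,3} : ι)} := by
    rw [Submodule.span_le]
    rintro x (rfl | rfl | rfl)
    · exact Submodule.subset_span (by simp)
    · exact add_mem (Submodule.subset_span (Set.mem_insert _ _))
        (Submodule.subset_span (by simp))
    · exact Submodule.subset_span (by simp)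
  have hDrank : finrank ℂ ↥((Submodule.map (dSM α β) (Ak (3-1))) ⊓
      (Ak 3 ⊓ LinearMap.ker (dSM α β))) = 3 := by
    rw [betti3_im α β hα, hAk3_ker α β hα, inf_eq_left.mpr hle]
    exact rank_triple linInd_mixed
  exact quot_rank hNrank hDrank

end Betti3
/-- For the Inoue S_M double complex (α ≠ 0): b1 = 1 (generated by φ2 - φ̄2), b2 = 0,
b3 = 1, and the non-Kählerness degrees are Δ¹ = 0 and Δ² = 2. -/
theorem inoue_SM_delta (α β : ℝ) (hα : α ≠ 0) :
    betti (dSM α β) 1 = 1 ∧ betti (dSM α β) 2 = 0 ∧ betti (dSM α β) 3 = 1 ∧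
    (Ak 1 ⊓ LinearMap.ker (dSM α β) =
      Submodule.map (dSM α β) (Ak 0) ⊔
        Submodule.span ℂ {e ({1} : Finset (Fin 4)) - e ({3} : Finset (Fin 4))}) ∧
    -- Δ¹ = 0:
    (hBC (delSM α β) (delbarSM α β) 1 0 + hBC (delSM α β) (delbarSM α β) 2 1) +
      (hBC (delSM α β) (delbarSM α β) 0 1 + hBC (delSM α β) (delbarSM α β) 1 2) =
      2 * betti (dSM α β) 1 ∧
    -- Δ² = 2:
    (hBC (delSM α β) (delbarSM α β) 2 0 + hBC (delSM α β) (delbarSM α β) 2 0) +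
      (hBC (delSM α β) (delbarSM α β) 1 1 + hBC (delSM α β) (delbarSM α β) 1 1) +
      (hBC (delSM α β) (delbarSM α β) 0 2 + hBC (delSM α β) (delbarSM α β) 0 2) =
      2 * betti (dSM α β) 2 + 2 := by
  refine ⟨betti1 α β hα, betti2 α β hα, betti3 α β hα, ?_, ?_, ?_⟩
  · rw [hmap0, bot_sup_eq]
    exact betti1_span α β hα
  · rw [hBC10 α β hα, hBC21 α β hα, hBC01 α β hα, hBC12 α β hα, betti1 α β hα]
  · rw [hBC20 α β hα, hBC11 α β hα, hBC02 α β hα, betti2 α β hα]
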